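/- Let T satisfy α‖f₁ − f₂‖² ≤ ‖T(f₁ − f₂)‖² for all f₁, f₂ ∈ A, with α > 0. Let f ∈ H, g = T f + e. Let f_A ∈ A satisfy ‖f − f_A‖ ≤ inf_{h∈A}‖f − h‖ + √δ, and let f_opt ∈ A satisfy ‖g − T f_opt‖² ≤ inf_{h∈A}‖g − T h‖² + ε. Then ‖f − f_opt‖ ≤ (2/√α)‖T(f − f_A) + e‖ + inf_{h∈A}‖f − h‖ + √ε/√α + √δ. -/

import Mathlib

theorem stmt_2 {E F : Type*} [NormedAddCommGroup E] [InnerProductSpace ℝ E] [CompleteSpace E]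
    [NormedAddCommGroup F] [InnerProductSpace ℝ F] [CompleteSpace F]
    (A : Set E) (hA : A.Nonempty) (T : E →L[ℝ] F) (α : ℝ) (hα : 0 < α)
    (hbi : ∀ f₁ ∈ A, ∀ f₂ ∈ A, α * ‖f₁ - f₂‖ ^ 2 ≤ ‖T (f₁ - f₂)‖ ^ 2)
    (f : E) (e : F) (g : F) (hg : g = T f + e)
    (ε δ : ℝ) (hε : 0 < ε) (hδ : 0 < δ)
    (fA : E) (hfA : fA ∈ A)
    (hfAnear : ‖f - fA‖ ≤ (⨅ h : A, ‖f - (h : E)‖) + Real.sqrt δ)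
    (fopt : E) (hfopt : fopt ∈ A)
    (hoptnear : ‖g - T fopt‖ ^ 2 ≤ (⨅ h : A, ‖g - T (h : E)‖ ^ 2) + ε) :
    ‖f - fopt‖ ≤ (2 / Real.sqrt α) * ‖T (f - fA) + e‖ + (⨅ h : A, ‖f - (h : E)‖)
      + Real.sqrt ε / Real.sqrt α + Real.sqrt δ := by
  set s := Real.sqrt α with hs
  have hspos : 0 < s := Real.sqrt_pos.mpr hα
  have hs2 : s ^ 2 = α := Real.sq_sqrt hα.le
  have hgA : g - T fA = T (f - fA) + e := by
    rw [hg, map_sub]; abel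
  have hinf_le : (⨅ h : A, ‖g - T (h : E)‖ ^ 2) ≤ ‖g - T fA‖ ^ 2 := by
    exact ciInf_le ⟨0, by rintro x ⟨h, rfl⟩; positivity⟩ (⟨fA, hfA⟩ : A)
  have h1 : ‖g - T fopt‖ ^ 2 ≤ ‖g - T fA‖ ^ 2 + ε := le_trans hoptnear (by linarith)
  have hse : Real.sqrt ε ^ 2 = ε := Real.sq_sqrt hε.le
  have h2 : ‖g - T fopt‖ ≤ ‖g - T fA‖ + Real.sqrt ε := by
    nlinarith [norm_nonneg (g - T fopt), norm_nonneg (g - T fA), Real.sqrt_nonneg ε,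
      mul_nonneg (norm_nonneg (g - T fA)) (Real.sqrt_nonneg ε)]
  have h3 : ‖T (fA - fopt)‖ ≤ ‖g - T fopt‖ + ‖g - T fA‖ := by
    have : T (fA - fopt) = (g - T fopt) - (g - T fA) := by rw [map_sub]; abel
    rw [this]; exact norm_sub_le _ _
  have hco : α * ‖fA - fopt‖ ^ 2 ≤ ‖T (fA - fopt)‖ ^ 2 := hbi fA hfA fopt hfopt
  have h4 : s * ‖fA - fopt‖ ≤ ‖T (fA - fopt)‖ := by
    nlinarith [norm_nonneg (fA - fopt), norm_nonneg (T (fA - fopt)),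
      mul_nonneg hspos.le (norm_nonneg (fA - fopt))]
  have h5 : s * ‖fA - fopt‖ ≤ 2 * ‖g - T fA‖ + Real.sqrt ε := by linarith
  have h6 : ‖fA - fopt‖ ≤ (2 / s) * ‖g - T fA‖ + Real.sqrt ε / s := by
    rw [div_mul_eq_mul_div, ← add_div, le_div_iff₀ hspos, mul_comm]
    linarith
  have h7 : ‖f - fopt‖ ≤ ‖f - fA‖ + ‖fA - fopt‖ := by
    have : f - fopt = (f - fA) + (fA - fopt) := by abel
    rw [this]; exact norm_add_le _ _
  rw [hgA] at h6
  linarith
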